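/- arXiv:math/0009061 — 2 statements merged into one kernel-verified Lean document; each statement's English description precedes it below -/
import Mathlib

section
/- The rank of the (l+2)×2l integer matrix B whose i-th row (1 ≤ i ≤ l) is e_i + e_{2l−i+1}, whose (l+1)-th row is (c_{11},c_{21},...,c_{l1},c_{l2},...,c_{22},c_{12}), and whose (l+2)-th row is (c_{12},c_{22},...,c_{l2},c_{l1},...,c_{21},c_{11}), equals l if c_{i1} = c_{i2} for all i = 1,...,l, and equals l+1 otherwise. -/
open MvPolynomial Finset

/-- Reversal of a vector in `ℕ^n`. -/
def revVec {n : ℕ} (ν : Fin n → ℕ) : Fin n → ℕ := fun j => ν j.rev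

/-- First row of the matrix `A`: `(c₁₁, c₂₁, …, c_{l1}, c_{l2}, …, c₂₂, c₁₂)`,
where `a i = c_{i1}` and `b i = c_{i2}` (0-indexed). -/
def row1 {l : ℕ} (a b : Fin l → ℤ) (j : Fin (2*l)) : ℤ :=
  if h : (j : ℕ) < l then a ⟨j, h⟩ else b ⟨2*l - 1 - j, by have := j.isLt; omega⟩

/-- Second row of `A`, which is the reversal of the first row. -/
def row2 {l : ℕ} (a b : Fin l → ℤ) (j : Fin (2*l)) : ℤ := row1 a b j.rev

/-- The set `M_A` of all `ν ∈ ℕ^{2l}` with `A·ν = (k,k)ᵀ` for some `k ∈ ℕ`. -/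
def MA {l : ℕ} (a b : Fin l → ℤ) : Set (Fin (2*l) → ℕ) :=
  {ν | ∃ k : ℕ, (∑ j, row1 a b j * (ν j : ℤ)) = (k : ℤ) ∧
                (∑ j, row2 a b j * (ν j : ℤ)) = (k : ℤ)}

/-- The `(l+2) × 2l` matrix `B`: the first `l` rows are `e_i + e_{2l-i+1}`, the last
two rows are the two rows of `A` (viewed over `ℚ`). -/
noncomputable def Bmat {l : ℕ} (a b : Fin l → ℤ) : Matrix (Fin (l+2)) (Fin (2*l)) ℚ :=
  fun i j =>
    if (i : ℕ) < l then (if (j : ℕ) = (i : ℕ) ∨ (j : ℕ) = 2*l - 1 - (i : ℕ) then 1 else 0)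
    else if (i : ℕ) = l then (row1 a b j : ℚ) else (row2 a b j : ℚ)

/-- symmetric basis rows -/
def rvec {l : ℕ} (i : Fin l) : Fin (2*l) → ℚ :=
  fun j => if (j : ℕ) = (i : ℕ) ∨ (j : ℕ) = 2*l - 1 - (i : ℕ) then 1 else 0

noncomputable def wvec {l : ℕ} (a b : Fin l → ℤ) : Fin (2*l) → ℚ :=
  fun j => (row1 a b j : ℚ)

lemma sum_smul_rvec {l : ℕ} (c : Fin l → ℚ) (j : Fin (2*l)) :
    (∑ i, c i • rvec i) j =
      if h : (j : ℕ) < l then c ⟨j, h⟩ else c ⟨2*l - 1 - j, by have := j.isLt; omega⟩ := by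
  simp only [Finset.sum_apply, Pi.smul_apply, rvec, smul_eq_mul]
  split
  · next h =>
    rw [Finset.sum_eq_single (⟨j, h⟩ : Fin l)]
    · rw [if_pos (Or.inl rfl), mul_one]
    · intro i _ hne
      have hne' : (i:ℕ) ≠ (j:ℕ) := fun he => hne (Fin.ext he)
      rw [if_neg, mul_zero]
      have := i.isLt
      omega
    · intro h'; exact absurd (Finset.mem_univ _) h'
  · next h =>
    rw [Finset.sum_eq_single (⟨2*l-1-j, by have := j.isLt; omega⟩ : Fin l)]
    · rw [if_pos (Or.inr (by simp only [Fin.val_mk]; have := j.isLt; omega)), mul_one]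
    · intro i _ hne
      have hne' : (i:ℕ) ≠ 2*l - 1 - (j:ℕ) := fun he => hne (Fin.ext he)
      rw [if_neg, mul_zero]
      have := i.isLt; have := j.isLt
      omega
    · intro h'; exact absurd (Finset.mem_univ _) h'

lemma rvec_indep {l : ℕ} : LinearIndependent ℚ (rvec (l := l)) := by
  rw [Fintype.linearIndependent_iff]
  intro g hg i
  have h := congrFun hg ⟨i, by have := i.isLt; omega⟩
  rw [sum_smul_rvec] at h
  rw [dif_pos (show ((⟨(i:ℕ), _⟩ : Fin (2*l)) : ℕ) < l from i.isLt)] at h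
  simpa using h

lemma wvec_rev_eq {l : ℕ} (a b : Fin l → ℤ) :
    (fun j => wvec a b j.rev) =
      (∑ i, (((a i + b i : ℤ)) : ℚ) • rvec i) - wvec a b := by
  funext j
  have hj := j.isLt
  simp only [Pi.sub_apply, sum_smul_rvec, wvec, row1]
  have hrev : (j.rev : ℕ) = 2*l - 1 - (j : ℕ) := by
    rw [Fin.val_rev]; omega
  by_cases h : (j : ℕ) < l
  · rw [dif_pos h, dif_pos h]
    rw [dif_neg (by omega : ¬ (j.rev : ℕ) < l)]
    have : (⟨2*l - 1 - (j.rev : ℕ), by omega⟩ : Fin l) = ⟨j, h⟩ := by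
      apply Fin.ext; simp only [Fin.val_mk]; omega
    rw [this]
    push_cast
    ring
  · rw [dif_neg h, dif_neg h]
    rw [dif_pos (by omega : (j.rev : ℕ) < l)]
    have : (⟨(j.rev : ℕ), by omega⟩ : Fin l) = ⟨2*l - 1 - (j : ℕ), by omega⟩ := by
      apply Fin.ext; simp only [Fin.val_mk]; omega
    rw [this]
    push_cast
    ring

lemma Bmat_row_lt {l : ℕ} (a b : Fin l → ℤ) (i : Fin (l+2)) (h : (i:ℕ) < l) :
    Bmat a b i = rvec ⟨i, h⟩ := by
  funext j; simp only [Bmat, rvec, if_pos h]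

lemma Bmat_row_mid {l : ℕ} (a b : Fin l → ℤ) (i : Fin (l+2)) (h : (i:ℕ) = l) :
    Bmat a b i = wvec a b := by
  funext j; simp [Bmat, wvec, h]

lemma Bmat_row_last {l : ℕ} (a b : Fin l → ℤ) (i : Fin (l+2)) (h1 : ¬ (i:ℕ) < l)
    (h2 : (i:ℕ) ≠ l) : Bmat a b i = fun j => wvec a b j.rev := by
  funext j; simp [Bmat, wvec, row2, h1, h2]

lemma wvec_eq_sum {l : ℕ} (a b : Fin l → ℤ) (h : ∀ i, a i = b i) :
    wvec a b = ∑ i, ((a i : ℚ)) • rvec i := by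
  funext j
  rw [sum_smul_rvec]
  have hj := j.isLt
  by_cases hc : (j : ℕ) < l
  · rw [dif_pos hc]; simp [wvec, row1, hc]
  · rw [dif_neg hc]; simp only [wvec, row1, dif_neg hc]
    rw [h ⟨2*l - 1 - (j:ℕ), by omega⟩]

/-- The rank of the `(l+2) × 2l` matrix `B` whose `i`-th row (`1 ≤ i ≤ l`) is
`e_i + e_{2l−i+1}`, whose `(l+1)`-th row is the first row of `A` and whose `(l+2)`-th
row is the second row of `A`, equals `l` if `c_{i1} = c_{i2}` for all `i`, and `l+1`
otherwise. -/
theorem rank_Bmat {l : ℕ} (a b : Fin l → ℤ) :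
    (Bmat a b).rank = (if ∀ i, a i = b i then l else l + 1) := by
  classical
  rw [Matrix.rank_eq_finrank_span_row]
  by_cases h : ∀ i, a i = b i
  · rw [if_pos h]
    have hmem : wvec a b ∈ Submodule.span ℚ (Set.range (rvec (l := l))) := by
      rw [wvec_eq_sum a b h]
      exact Submodule.sum_mem _ fun i _ =>
        Submodule.smul_mem _ _ (Submodule.subset_span ⟨i, rfl⟩)
    have hmem2 : ∀ i : Fin l,
        (((a i + b i : ℤ)) : ℚ) • rvec i ∈ Submodule.span ℚ (Set.range (rvec (l := l))) :=
      fun i => Submodule.smul_mem _ _ (Submodule.subset_span ⟨i, rfl⟩)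
    have hspan : Submodule.span ℚ (Set.range (Bmat a b))
        = Submodule.span ℚ (Set.range (rvec (l := l))) := by
      apply le_antisymm
      · rw [Submodule.span_le]
        rintro _ ⟨i, rfl⟩
        by_cases hi : (i:ℕ) < l
        · rw [Bmat_row_lt a b i hi]
          exact Submodule.subset_span ⟨_, rfl⟩
        · by_cases hi2 : (i:ℕ) = l
          · rw [Bmat_row_mid a b i hi2]; exact hmem
          · rw [Bmat_row_last a b i hi hi2, wvec_rev_eq a b]
            exact Submodule.sub_mem _ (Submodule.sum_mem _ fun i _ => hmem2 i) hmem
      · rw [Submodule.span_le]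
        rintro _ ⟨i, rfl⟩
        exact Submodule.subset_span
          ⟨⟨i, by have := i.isLt; omega⟩, Bmat_row_lt a b _ i.isLt⟩
    rw [show Set.range (Bmat a b).row = Set.range (Bmat a b) from rfl]
    rw [hspan, finrank_span_eq_card rvec_indep, Fintype.card_fin]
  · rw [if_neg h]
    push_neg at h
    obtain ⟨i0, hi0⟩ := h
    have hi0l := i0.isLt
    set F : Fin (l+1) → (Fin (2*l) → ℚ) := Fin.snoc rvec (wvec a b) with hF
    have hFlt : ∀ i : Fin l, F i.castSucc = rvec i := fun i => Fin.snoc_castSucc _ _ _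
    have hFlast : F (Fin.last l) = wvec a b := Fin.snoc_last _ _
    have hFind : LinearIndependent ℚ F := by
      rw [Fintype.linearIndependent_iff]
      intro g hg
      rw [Fin.sum_univ_castSucc] at hg
      simp only [hFlt, hFlast] at hg
      have e1 := congrFun hg ⟨(i0 : ℕ), by omega⟩
      have e2 := congrFun hg ⟨2*l - 1 - (i0 : ℕ), by omega⟩
      rw [Pi.add_apply, Pi.smul_apply, Pi.zero_apply, sum_smul_rvec,
        dif_pos (show ((⟨(i0:ℕ), by omega⟩ : Fin (2*l)) : ℕ) < l from hi0l)] at e1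
      rw [Pi.add_apply, Pi.smul_apply, Pi.zero_apply, sum_smul_rvec,
        dif_neg (show ¬ ((⟨2*l - 1 - (i0:ℕ), by omega⟩ : Fin (2*l)) : ℕ) < l by
          simp only [Fin.val_mk]; omega)] at e2
      have hw1 : wvec a b ⟨(i0 : ℕ), by omega⟩ = (a i0 : ℚ) := by
        simp only [wvec, row1, dif_pos (show ((⟨(i0:ℕ), by omega⟩ : Fin (2*l)) : ℕ) < l from hi0l)]
      have hw2 : wvec a b ⟨2*l - 1 - (i0 : ℕ), by omega⟩ = (b i0 : ℚ) := by
        simp only [wvec, row1,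
          dif_neg (show ¬ ((⟨2*l - 1 - (i0:ℕ), by omega⟩ : Fin (2*l)) : ℕ) < l by
            simp only [Fin.val_mk]; omega)]
        congr 1
        congr 1
        apply Fin.ext
        simp only [Fin.val_mk]
        omega
      rw [hw1, smul_eq_mul] at e1
      rw [hw2, smul_eq_mul] at e2
      have hidx1 :
          (⟨((⟨(i0 : ℕ), by omega⟩ : Fin (2*l)) : ℕ), hi0l⟩ : Fin l) = i0 := by
        apply Fin.ext; rfl
      have hidx2 :
          (⟨2*l - 1 - ((⟨2*l - 1 - (i0 : ℕ), by omega⟩ : Fin (2*l)) : ℕ), by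
            simp only [Fin.val_mk]; omega⟩ : Fin l) = i0 := by
        apply Fin.ext; simp only [Fin.val_mk]; omega
      rw [hidx1] at e1
      rw [hidx2] at e2
      have hG : g (Fin.last l) = 0 := by
        have hab : (a i0 : ℚ) ≠ (b i0 : ℚ) := by exact_mod_cast hi0
        have : g (Fin.last l) * ((a i0 : ℚ) - (b i0 : ℚ)) = 0 := by ring_nf; linarith
        rcases mul_eq_zero.mp this with h' | h'
        · exact h'
        · exact absurd (by linarith : (a i0 : ℚ) = (b i0 : ℚ)) hab
      rw [hG, zero_smul, add_zero] at hg
      have hall : ∀ i : Fin l, g i.castSucc = 0 :=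
        Fintype.linearIndependent_iff.mp rvec_indep (fun i => g i.castSucc) hg
      intro i
      induction i using Fin.lastCases with
      | last => exact hG
      | cast i => exact hall i
    have hspan : Submodule.span ℚ (Set.range (Bmat a b))
        = Submodule.span ℚ (Set.range F) := by
      have hrmem : ∀ i : Fin l, rvec i ∈ Submodule.span ℚ (Set.range F) := fun i =>
        Submodule.subset_span ⟨i.castSucc, hFlt i⟩
      have hwmem : wvec a b ∈ Submodule.span ℚ (Set.range F) :=
        Submodule.subset_span ⟨Fin.last l, hFlast⟩
      apply le_antisymm
      · rw [Submodule.span_le]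
        rintro _ ⟨i, rfl⟩
        by_cases hi : (i:ℕ) < l
        · rw [Bmat_row_lt a b i hi]; exact hrmem _
        · by_cases hi2 : (i:ℕ) = l
          · rw [Bmat_row_mid a b i hi2]; exact hwmem
          · rw [Bmat_row_last a b i hi hi2, wvec_rev_eq a b]
            exact Submodule.sub_mem _
              (Submodule.sum_mem _ fun i _ => Submodule.smul_mem _ _ (hrmem i)) hwmem
      · rw [Submodule.span_le]
        rintro _ ⟨i, rfl⟩
        induction i using Fin.lastCases with
        | last =>
          rw [hFlast]
          exact Submodule.subset_span ⟨⟨l, by omega⟩, Bmat_row_mid a b _ rfl⟩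
        | cast i =>
          rw [hFlt i]
          exact Submodule.subset_span
            ⟨⟨i, by have := i.isLt; omega⟩, Bmat_row_lt a b _ i.isLt⟩
    rw [show Set.range (Bmat a b).row = Set.range (Bmat a b) from rfl]
    rw [hspan, finrank_span_eq_card hFind, Fintype.card_fin]
end

section
/- Let ψ: ℂ[x_1,...,x_n,t_1,...,t_m,t] → ℂ(t_1,...,t_m) be as above (x_i ↦ f_i/g_i, t ↦ 1/g, t_j ↦ t_j) and let H = ⟨1 − tg, g_i x_i − f_i : i⟩. If h ∈ ker(ψ) is linear in x_1,...,x_n, i.e., h = Σ_{i=1}^n α_i(t_1,...,t_m,t) x_i + α_0(t_1,...,t_m,t), then h ∈ H; indeed h = Σ_{i=1}^n α_i (x_i g_i − f_i) t g̃_i + (1 − tg) h, where g̃_i = g/g_i. -/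
open MvPolynomial Finset

/-- The ring homomorphism `ψ : ℂ[x₁,…,xₙ,t₁,…,tₘ,t] → ℂ(t₁,…,tₘ)` sending
`x_i ↦ f_i/g_i`, `t_j ↦ t_j` and `t ↦ 1/(g₁⋯gₙ)`.  The variables are indexed by
`Fin n ⊕ (Fin m ⊕ Unit)`: `Sum.inl i` is `x_i`, `Sum.inr (Sum.inl j)` is `t_j`, and
`Sum.inr (Sum.inr ())` is `t`. -/
noncomputable def psi {n m : ℕ} (f g : Fin n → MvPolynomial (Fin m) ℂ) :
    MvPolynomial (Fin n ⊕ (Fin m ⊕ Unit)) ℂ →+* FractionRing (MvPolynomial (Fin m) ℂ) :=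
  MvPolynomial.eval₂Hom
    ((algebraMap (MvPolynomial (Fin m) ℂ) (FractionRing (MvPolynomial (Fin m) ℂ))).comp
      (MvPolynomial.C))
    (fun v => match v with
      | Sum.inl i => algebraMap (MvPolynomial (Fin m) ℂ) _ (f i)
          / algebraMap (MvPolynomial (Fin m) ℂ) _ (g i)
      | Sum.inr (Sum.inl j) => algebraMap (MvPolynomial (Fin m) ℂ) _ (MvPolynomial.X j)
      | Sum.inr (Sum.inr _) => 1 / algebraMap (MvPolynomial (Fin m) ℂ) _ (∏ i, g i))

/-- The ideal `H = ⟨1 − t·g, g₁x₁ − f₁, …, gₙxₙ − fₙ⟩` in `ℂ[x₁,…,xₙ,t₁,…,tₘ,t]`,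
where `g = g₁⋯gₙ`. -/
noncomputable def Hideal {n m : ℕ} (f g : Fin n → MvPolynomial (Fin m) ℂ) :
    Ideal (MvPolynomial (Fin n ⊕ (Fin m ⊕ Unit)) ℂ) :=
  Ideal.span ({1 - X (Sum.inr (Sum.inr ())) * rename (Sum.inr ∘ Sum.inl) (∏ i, g i)} ∪
    Set.range (fun i => rename (Sum.inr ∘ Sum.inl) (g i) * X (Sum.inl i)
      - rename (Sum.inr ∘ Sum.inl) (f i)))

/-- Transfer lemma: if a one-variable polynomial over `S` vanishes when the variable is
sent to an inverse of (the image of) `g` in a ring where the base map is injective, then it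
vanishes whenever the variable is sent to an inverse of `g` in any ring. -/
theorem pow_mul_eval2 {S B : Type*} [CommRing S] [CommRing B]
    (χ : S →+* B) (g : S) (w : B) (hw : χ g * w = 1) (P : Polynomial S) :
    χ g ^ P.natDegree * Polynomial.eval₂ χ w P
      = χ (∑ k ∈ Finset.range (P.natDegree + 1), P.coeff k * g ^ (P.natDegree - k)) := by
  rw [Polynomial.eval₂_eq_sum_range, Finset.mul_sum, map_sum]
  refine Finset.sum_congr rfl fun k hk => ?_
  have hk' : k ≤ P.natDegree := Nat.lt_succ_iff.mp (Finset.mem_range.mp hk)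
  have hpow : χ g ^ P.natDegree = χ g ^ (P.natDegree - k) * χ g ^ k := by
    rw [← pow_add, Nat.sub_add_cancel hk']
  have h2 : χ g ^ k * w ^ k = 1 := by rw [← mul_pow, hw, one_pow]
  rw [map_mul, map_pow, hpow]
  linear_combination χ (P.coeff k) * χ g ^ (P.natDegree - k) * h2

theorem eval2_transfer {S A K : Type*} [CommRing S] [CommRing A] [CommRing K]
    (φ : S →+* A) (ι : S →+* K) (hι : Function.Injective ι)
    (g : S) (u : A) (hu : φ g * u = 1) (v : K) (hv : ι g * v = 1)
    (P : Polynomial S) (hP : Polynomial.eval₂ ι v P = 0) :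
    Polynomial.eval₂ φ u P = 0 := by
  have hq0 : (∑ k ∈ Finset.range (P.natDegree + 1),
      P.coeff k * g ^ (P.natDegree - k)) = 0 := by
    apply hι
    have h5 := pow_mul_eval2 ι g v hv P
    rw [hP, mul_zero] at h5
    rw [map_zero, ← h5]
  have h3 : φ g ^ P.natDegree * Polynomial.eval₂ φ u P = 0 := by
    rw [pow_mul_eval2 φ g u hu P, hq0, map_zero]
  have h4 : φ g ^ P.natDegree * u ^ P.natDegree = 1 := by rw [← mul_pow, hu, one_pow]
  calc Polynomial.eval₂ φ u P
      = (φ g ^ P.natDegree * u ^ P.natDegree) * Polynomial.eval₂ φ u P := by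
        rw [h4, one_mul]
    _ = u ^ P.natDegree * (φ g ^ P.natDegree * Polynomial.eval₂ φ u P) := by ring
    _ = 0 := by rw [h3, mul_zero]

set_option maxHeartbeats 1000000 in
/-- If `h ∈ ker(ψ)` is linear in `x₁,…,xₙ`, i.e.
`h = Σᵢ αᵢ(t₁,…,tₘ,t)·xᵢ + α₀(t₁,…,tₘ,t)`, then `h ∈ H`. -/
theorem linear_mem_Hideal {n m : ℕ} (f g : Fin n → MvPolynomial (Fin m) ℂ)
    (hg : ∀ i, g i ≠ 0)
    (α : Fin n → MvPolynomial (Fin m ⊕ Unit) ℂ) (α₀ : MvPolynomial (Fin m ⊕ Unit) ℂ)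
    (h : MvPolynomial (Fin n ⊕ (Fin m ⊕ Unit)) ℂ)
    (hh : h = (∑ i, rename Sum.inr (α i) * X (Sum.inl i)) + rename Sum.inr α₀)
    (hker : h ∈ RingHom.ker (psi f g)) :
    h ∈ Hideal f g := by
  classical
  let ι : MvPolynomial (Fin m) ℂ →+* FractionRing (MvPolynomial (Fin m) ℂ) :=
    algebraMap _ _
  have hι : Function.Injective ι :=
    IsFractionRing.injective (MvPolynomial (Fin m) ℂ) (FractionRing (MvPolynomial (Fin m) ℂ))
  let π : MvPolynomial (Fin n ⊕ (Fin m ⊕ Unit)) ℂ →+* _ :=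
    Ideal.Quotient.mk (Hideal f g)
  let ρ : MvPolynomial (Fin m) ℂ →+* MvPolynomial (Fin n ⊕ (Fin m ⊕ Unit)) ℂ :=
    (rename (Sum.inr ∘ Sum.inl) : MvPolynomial (Fin m) ℂ →ₐ[ℂ] _).toRingHom
  let φ : MvPolynomial (Fin m) ℂ →+* _ := π.comp ρ
  let u := π (X (Sum.inr (Sum.inr ())))
  set G : MvPolynomial (Fin m) ℂ := ∏ i, g i with hG
  have hG0 : G ≠ 0 := Finset.prod_ne_zero_iff.mpr fun i _ => hg i
  have hιG0 : ι G ≠ 0 := fun hc => hG0 (hι (by rw [hc, map_zero]))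
  let v : FractionRing (MvPolynomial (Fin m) ℂ) := 1 / ι G
  have hv : ι G * v = 1 := by rw [show v = 1 / ι G from rfl, mul_one_div_cancel hιG0]
  -- generators
  have hgen1 : (1 - X (Sum.inr (Sum.inr ())) * rename (Sum.inr ∘ Sum.inl) G)
      ∈ Hideal f g := Ideal.subset_span (Or.inl rfl)
  have hgen2 : ∀ i, (rename (Sum.inr ∘ Sum.inl) (g i) * X (Sum.inl i)
      - rename (Sum.inr ∘ Sum.inl) (f i)) ∈ Hideal f g :=
    fun i => Ideal.subset_span (Or.inr ⟨i, rfl⟩)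
  have hu : φ G * u = 1 := by
    have h1 := Ideal.Quotient.eq_zero_iff_mem.mpr hgen1
    simp only [map_sub, map_mul, map_one] at h1
    have h2 : (1 : _) = π (X (Sum.inr (Sum.inr ()))) * π (rename (Sum.inr ∘ Sum.inl) G) := by
      linear_combination h1
    have h3 : φ G = π (rename (Sum.inr ∘ Sum.inl) G) := rfl
    rw [h3, mul_comm]
    exact h2.symm
  -- ψ composed with rename along the t-variables is the algebra map
  have hψρ : (psi f g).comp ρ = ι := by
    apply MvPolynomial.ringHom_ext
    · intro c
      simp [psi, ρ, ι]
    · intro j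
      simp [psi, ρ, ι]
  have hψρ' : ∀ s : MvPolynomial (Fin m) ℂ,
      psi f g (rename (Sum.inr ∘ Sum.inl) s) = ι s :=
    fun s => RingHom.congr_fun hψρ s
  -- ψ kills the generators g_i x_i - f_i
  have hψgen2 : ∀ i, psi f g (rename (Sum.inr ∘ Sum.inl) (g i) * X (Sum.inl i)
      - rename (Sum.inr ∘ Sum.inl) (f i)) = 0 := by
    intro i
    have hgi : ι (g i) ≠ 0 := fun hc => hg i (hι (by rw [hc, map_zero]))
    have hX : psi f g (X (Sum.inl i)) = ι (f i) / ι (g i) := by simp [psi, ι]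
    rw [RingHom.map_sub, RingHom.map_mul, hψρ', hψρ', hX]
    field_simp
    ring
  -- the partial products
  set gt : Fin n → MvPolynomial (Fin m) ℂ := fun i => ∏ j ∈ Finset.univ.erase i, g j with hgt
  have hGsplit : ∀ i, G = gt i * g i := by
    intro i
    rw [hgt, hG]
    exact (Finset.prod_erase_mul _ _ (Finset.mem_univ i)).symm
  -- the element β
  set β : MvPolynomial (Fin m ⊕ Unit) ℂ :=
    (∑ i, α i * rename Sum.inl (gt i * f i)) + rename Sum.inl G * α₀ with hβ
  -- the key identity
  have term : ∀ i : Fin n, rename (Sum.inr ∘ Sum.inl) G * (rename Sum.inr (α i) * X (Sum.inl i))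
      - rename Sum.inr (α i * rename Sum.inl (gt i * f i))
      = rename Sum.inr (α i) * rename (Sum.inr ∘ Sum.inl) (gt i) *
          (rename (Sum.inr ∘ Sum.inl) (g i) * X (Sum.inl i)
            - rename (Sum.inr ∘ Sum.inl) (f i)) := by
    intro i
    have e1 : rename (Sum.inr : (Fin m ⊕ Unit) → Fin n ⊕ (Fin m ⊕ Unit)) (α i * rename Sum.inl (gt i * f i))
        = rename Sum.inr (α i) * (rename (Sum.inr ∘ Sum.inl) (gt i)
            * rename (Sum.inr ∘ Sum.inl) (f i)) := by
      rw [map_mul, rename_rename, map_mul]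
    have e2 : rename ((Sum.inr ∘ Sum.inl) : Fin m → Fin n ⊕ (Fin m ⊕ Unit)) G
        = rename (Sum.inr ∘ Sum.inl) (gt i) * rename (Sum.inr ∘ Sum.inl) (g i) := by
      rw [← map_mul, ← hGsplit i]
    rw [e1, e2]
    ring
  have e0 : rename (Sum.inr : (Fin m ⊕ Unit) → Fin n ⊕ (Fin m ⊕ Unit)) (rename Sum.inl G * α₀)
      = rename (Sum.inr ∘ Sum.inl) G * rename Sum.inr α₀ := by
    rw [map_mul, rename_rename]
  have ident : rename (Sum.inr ∘ Sum.inl) G * h - rename Sum.inr β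
      = ∑ i, rename Sum.inr (α i) * rename (Sum.inr ∘ Sum.inl) (gt i) *
          (rename (Sum.inr ∘ Sum.inl) (g i) * X (Sum.inl i)
            - rename (Sum.inr ∘ Sum.inl) (f i)) := by
    calc rename (Sum.inr ∘ Sum.inl) G * h - rename Sum.inr β
        = ∑ i, (rename (Sum.inr ∘ Sum.inl) G * (rename Sum.inr (α i) * X (Sum.inl i))
            - rename Sum.inr (α i * rename Sum.inl (gt i * f i))) := by
          rw [hh, hβ, map_add, map_sum, e0, mul_add, Finset.mul_sum, Finset.sum_sub_distrib]
          ring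
      _ = _ := Finset.sum_congr rfl fun i _ => term i
  -- π of β equals π of G * h
  have hπβ : π (rename (Sum.inr ∘ Sum.inl) G * h) = π (rename Sum.inr β) := by
    rw [Ideal.Quotient.mk_eq_mk_iff_sub_mem, ident]
    exact Ideal.sum_mem _ fun i _ => Ideal.mul_mem_left _ _ (hgen2 i)
  -- ψ of β is zero
  have hψh : psi f g h = 0 := hker
  have hψβ : psi f g (rename Sum.inr β) = 0 := by
    have hβeq : (rename Sum.inr β : MvPolynomial (Fin n ⊕ (Fin m ⊕ Unit)) ℂ)
        = rename (Sum.inr ∘ Sum.inl) G * h -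
        ∑ i, rename Sum.inr (α i) * rename (Sum.inr ∘ Sum.inl) (gt i) *
          (rename (Sum.inr ∘ Sum.inl) (g i) * X (Sum.inl i)
            - rename (Sum.inr ∘ Sum.inl) (f i)) := by
      rw [← ident]; ring
    rw [hβeq, RingHom.map_sub, RingHom.map_mul, hψh, mul_zero, map_sum, zero_sub, neg_eq_zero]
    refine Finset.sum_eq_zero fun i _ => ?_
    rw [RingHom.map_mul, hψgen2, mul_zero]
  -- the bridge to one-variable polynomials
  let Φ : MvPolynomial (Fin m ⊕ Unit) ℂ →+* Polynomial (MvPolynomial (Fin m) ℂ) :=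
    MvPolynomial.eval₂Hom (Polynomial.C.comp MvPolynomial.C)
      (Sum.elim (fun j => Polynomial.C (MvPolynomial.X j)) (fun _ => Polynomial.X))
  have hKcomp : (Polynomial.eval₂RingHom ι v).comp Φ
      = (psi f g).comp
        ((rename (Sum.inr : (Fin m ⊕ Unit) → Fin n ⊕ (Fin m ⊕ Unit)) :
            MvPolynomial (Fin m ⊕ Unit) ℂ →ₐ[ℂ] MvPolynomial (Fin n ⊕ (Fin m ⊕ Unit)) ℂ)).toRingHom := by
    apply MvPolynomial.ringHom_ext
    · intro c
      simp [Φ, psi, ι]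
    · rintro (j | ⟨⟩)
      · simp [Φ, psi, ι]
      · simp [Φ, psi, v, ι]
        rw [hG]
        exact map_prod _ _ _
  have hAcomp : (Polynomial.eval₂RingHom φ u).comp Φ
      = π.comp
        ((rename (Sum.inr : (Fin m ⊕ Unit) → Fin n ⊕ (Fin m ⊕ Unit)) :
            MvPolynomial (Fin m ⊕ Unit) ℂ →ₐ[ℂ] MvPolynomial (Fin n ⊕ (Fin m ⊕ Unit)) ℂ)).toRingHom := by
    apply MvPolynomial.ringHom_ext
    · intro c
      simp [Φ, φ, ρ, u, π]
    · rintro (j | ⟨⟩)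
      · simp [Φ, φ, ρ, u, π]
      · simp [Φ, φ, ρ, u, π]
  have hP : Polynomial.eval₂ ι v (Φ β) = 0 := by
    have h6 := RingHom.congr_fun hKcomp β
    simp only [RingHom.coe_comp, Function.comp_apply, Polynomial.coe_eval₂RingHom,
      AlgHom.toRingHom_eq_coe, RingHom.coe_coe] at h6
    rw [h6]
    exact hψβ
  have hfinal : Polynomial.eval₂ φ u (Φ β) = 0 :=
    eval2_transfer φ ι hι G u hu v hv (Φ β) hP
  have hπβ0 : π (rename Sum.inr β) = 0 := by
    have h6 := RingHom.congr_fun hAcomp β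
    simp only [RingHom.coe_comp, Function.comp_apply, Polynomial.coe_eval₂RingHom,
      AlgHom.toRingHom_eq_coe, RingHom.coe_coe] at h6
    rw [← h6]
    exact hfinal
  have hπGh : φ G * π h = 0 := by
    have h7 : φ G * π h = π (rename (Sum.inr ∘ Sum.inl) G * h) := (RingHom.map_mul π _ _).symm
    rw [h7, hπβ, hπβ0]
  have : π h = 0 := by
    calc π h = (φ G * u) * π h := by rw [hu, one_mul]
      _ = u * (φ G * π h) := by ring
      _ = 0 := by rw [hπGh, mul_zero]
  exact Ideal.Quotient.eq_zero_iff_mem.mp this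
end
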